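/- Let P be a shift-invariant probability measure on A^ℤ such that for every n-cylinder and all t > 0, P{T_{a₁ⁿ}·P([a₁ⁿ]) ≤ t} ≤ Ce^{−cn} + ρ₂ t for constants C, c, ρ₂ > 0. Then for every α₂ > 1, eventually (P×P)-almost surely, log(W⁺ₙ(ω,ω′) · P([ω₁ⁿ])) > −α₂ log n, where W⁺ₙ(ω,ω′) = T_{ω₁ⁿ}(ω′). -/

import Mathlib

open MeasureTheory Filter Finset

def shift {A : Type*} (ω : ℤ → A) : ℤ → A := fun k => ω (k + 1)

def cylinder {A : Type*} {n : ℕ} (x : Fin n → A) : Set (ℤ → A) :=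
  {ω | ∀ i : Fin n, ω i = x i}

def blockOf {A : Type*} (n : ℕ) (ω : ℤ → A) : Fin n → A := fun i => ω i

noncomputable def hitTime {A : Type*} {n : ℕ} (x : Fin n → A) (ω : ℤ → A) : ℕ :=
  sInf {k : ℕ | 1 ≤ k ∧ shift^[k] ω ∈ cylinder x}

noncomputable def waitTime {A : Type*} (n : ℕ) (ω ω' : ℤ → A) : ℕ :=
  hitTime (blockOf n ω) ω'

section Aux

variable {A : Type*}

lemma shift_iterate (k : ℕ) (ω : ℤ → A) (j : ℤ) : (shift^[k] ω) j = ω (j + k) := by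
  induction k generalizing ω j with
  | zero => simp
  | succ k ih =>
    rw [Function.iterate_succ_apply, ih (shift ω) j]
    show ω (j + k + 1) = ω (j + (k + 1 : ℕ))
    congr 1
    push_cast
    ring

variable [MeasurableSpace A]

lemma measurable_shift : Measurable (shift : (ℤ → A) → (ℤ → A)) :=
  measurable_pi_lambda _ fun k => measurable_pi_apply (k + 1)

lemma measurableSet_cylinder [MeasurableSingletonClass A] {n : ℕ} (x : Fin n → A) :
    MeasurableSet (_root_.cylinder x) := by
  have h : _root_.cylinder x = ⋂ i : Fin n, (fun ω : ℤ → A => ω (i : ℤ)) ⁻¹' {x i} := by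
    ext ω; simp only [_root_.cylinder, Set.mem_setOf_eq, Set.mem_iInter, Set.mem_preimage,
      Set.mem_singleton_iff]
  rw [h]
  exact MeasurableSet.iInter fun i =>
    (measurable_pi_apply ((i : ℤ))) (measurableSet_singleton _)

lemma measurableSet_hitTime_eq [MeasurableSingletonClass A] {n : ℕ} (x : Fin n → A) (m : ℕ) :
    MeasurableSet {ω : ℤ → A | hitTime x ω = m} := by
  have hD : ∀ k : ℕ, MeasurableSet {ω : ℤ → A | shift^[k] ω ∈ _root_.cylinder x} :=
    fun k => (measurable_shift.iterate k) (measurableSet_cylinder x)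
  rcases Nat.eq_zero_or_pos m with rfl | hm
  · have he : {ω : ℤ → A | hitTime x ω = 0}
        = ⋂ k : ℕ, ⋂ (_ : 1 ≤ k), {ω : ℤ → A | shift^[k] ω ∈ _root_.cylinder x}ᶜ := by
      ext ω
      simp only [Set.mem_setOf_eq, Set.mem_iInter, Set.mem_compl_iff, hitTime]
      constructor
      · intro h k hk hmem
        rcases Nat.sInf_eq_zero.mp h with h0 | hemp
        · exact absurd h0.1 (by norm_num)
        · have hk' : k ∈ {k : ℕ | 1 ≤ k ∧ shift^[k] ω ∈ _root_.cylinder x} := ⟨hk, hmem⟩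
          rw [hemp] at hk'
          exact hk'
      · intro h
        have hemp : {k : ℕ | 1 ≤ k ∧ shift^[k] ω ∈ _root_.cylinder x} = ∅ := by
          ext k
          simp only [Set.mem_setOf_eq, Set.mem_empty_iff_false, iff_false, not_and]
          exact fun hk => h k hk
        rw [hemp, Nat.sInf_empty]
    rw [he]
    exact MeasurableSet.iInter fun k => MeasurableSet.iInter fun _ => (hD k).compl
  · have he : {ω : ℤ → A | hitTime x ω = m}
        = {ω : ℤ → A | shift^[m] ω ∈ _root_.cylinder x} ∩
          ⋂ k : ℕ, ⋂ (_ : 1 ≤ k) (_ : k < m), {ω : ℤ → A | shift^[k] ω ∈ _root_.cylinder x}ᶜ := by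
      ext ω
      simp only [Set.mem_setOf_eq, Set.mem_inter_iff, Set.mem_iInter, Set.mem_compl_iff, hitTime]
      constructor
      · intro h
        have hne : {k : ℕ | 1 ≤ k ∧ shift^[k] ω ∈ _root_.cylinder x}.Nonempty := by
          by_contra hemp
          rw [Set.not_nonempty_iff_eq_empty] at hemp
          rw [hemp, Nat.sInf_empty] at h
          omega
        have hmem := Nat.sInf_mem hne
        rw [h] at hmem
        refine ⟨hmem.2, fun k hk hkm hmemk => ?_⟩
        have hkmem : k ∈ {k : ℕ | 1 ≤ k ∧ shift^[k] ω ∈ _root_.cylinder x} := ⟨hk, hmemk⟩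
        have hle := Nat.sInf_le hkmem
        rw [h] at hle
        omega
      · rintro ⟨hmem, hlt⟩
        have h1 : m ∈ {k : ℕ | 1 ≤ k ∧ shift^[k] ω ∈ _root_.cylinder x} := ⟨hm, hmem⟩
        refine le_antisymm (Nat.sInf_le h1) ?_
        by_contra hcon
        push_neg at hcon
        have hmem2 := Nat.sInf_mem (⟨m, h1⟩ : Set.Nonempty {k : ℕ | 1 ≤ k ∧ shift^[k] ω ∈ _root_.cylinder x})
        exact hlt _ hmem2.1 hcon hmem2.2
    rw [he]
    exact (hD m).inter (MeasurableSet.iInter fun k => MeasurableSet.iInter fun _ =>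
      MeasurableSet.iInter fun _ => (hD k).compl)

lemma measurableSet_hitSet [MeasurableSingletonClass A] {n : ℕ} (x : Fin n → A) (q r : ℝ) :
    MeasurableSet {ω : ℤ → A | (hitTime x ω : ℝ) * q ≤ r} := by
  have h : {ω : ℤ → A | (hitTime x ω : ℝ) * q ≤ r}
      = ⋃ m : ℕ, ⋃ (_ : (m : ℝ) * q ≤ r), {ω : ℤ → A | hitTime x ω = m} := by
    ext ω
    simp only [Set.mem_setOf_eq, Set.mem_iUnion]
    exact ⟨fun h => ⟨hitTime x ω, h, rfl⟩, fun ⟨m, hm, he⟩ => by rw [he]; exact hm⟩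
  rw [h]
  exact MeasurableSet.iUnion fun m => MeasurableSet.iUnion fun _ => measurableSet_hitTime_eq x m

lemma preimage_eq_of_invariant {Ψ : (ℤ → A) → (ℤ → A)}
    (hΨ : ∀ (ω : ℤ → A) (i : ℤ) (E : Set A), MeasurableSet E → (Ψ ω i ∈ E ↔ ω i ∈ E))
    {B : Set (ℤ → A)} (hB : MeasurableSet B) :
    Ψ ⁻¹' B = B := by
  let m' : MeasurableSpace (ℤ → A) :=
    { MeasurableSet' := fun s => Ψ ⁻¹' s = s
      measurableSet_empty := by simp
      measurableSet_compl := fun s hs => by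
        show Ψ ⁻¹' sᶜ = sᶜ
        rw [Set.preimage_compl]
        rw [show Ψ ⁻¹' s = s from hs]
      measurableSet_iUnion := fun f hf => by
        show Ψ ⁻¹' (⋃ i, f i) = ⋃ i, f i
        rw [Set.preimage_iUnion]
        exact Set.iUnion_congr hf }
  have hle : (MeasurableSpace.pi : MeasurableSpace (ℤ → A)) ≤ m' := by
    refine iSup_le fun i => ?_
    intro s hs
    obtain ⟨E, hE, rfl⟩ := hs
    show Ψ ⁻¹' ((fun ω : ℤ → A => ω i) ⁻¹' E) = (fun ω : ℤ → A => ω i) ⁻¹' E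
    ext ω
    simp only [Set.mem_preimage]
    exact hΨ ω i E hE
  exact hle B hB

end Aux

/-- under the lower-tail bound `P{T_{a₁ⁿ}·P([a₁ⁿ]) ≤ t} ≤ Ce^{−cn} + ρ₂ t`,
for every `α₂ > 1`, eventually `P×P`-almost surely
`log (W⁺ₙ(ω,ω')·P([ω₁ⁿ])) > −α₂ log n`. -/
theorem waiting_time_log_lower_bound
    {A : Type*} [Fintype A] [MeasurableSpace A]
    (P : Measure (ℤ → A)) [IsProbabilityMeasure P]
    (hinv : MeasurePreserving shift P P)
    (C c ρ₂ : ℝ) (hC : 0 < C) (hc : 0 < c) (hρ₂ : 0 < ρ₂)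
    (hTail : ∀ (n : ℕ) (a : Fin n → A), ∀ t : ℝ, 0 < t →
      (P {ω | (hitTime a ω : ℝ) * (P (cylinder a)).toReal ≤ t}).toReal ≤
        C * Real.exp (-c * n) + ρ₂ * t)
    (α₂ : ℝ) (hα₂ : 1 < α₂) :
    ∀ᵐ p ∂(P.prod P), ∀ᶠ n : ℕ in atTop,
      Real.log ((waitTime n p.1 p.2 : ℝ) * (P (cylinder (blockOf n p.1))).toReal) >
        -α₂ * Real.log n := by
  classical
  by_cases hsing : ∀ z : A, MeasurableSet ({z} : Set A)
  · -- all singletons measurable: classical Borel–Cantelli proof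
    haveI : MeasurableSingletonClass A := ⟨hsing⟩
    set μ := P.prod P with hμ
    set B : ℕ → Set ((ℤ → A) × (ℤ → A)) := fun n =>
      {p | (waitTime n p.1 p.2 : ℝ) * (P (_root_.cylinder (blockOf n p.1))).toReal ≤ (n : ℝ) ^ (-α₂)}
      with hBdef
    have hBeq : ∀ n : ℕ, B n = ⋃ a : Fin n → A,
        (_root_.cylinder a) ×ˢ
          {ω' : ℤ → A | (hitTime a ω' : ℝ) * (P (_root_.cylinder a)).toReal ≤ (n : ℝ) ^ (-α₂)} := by
      intro n
      ext p
      simp only [hBdef, Set.mem_setOf_eq, Set.mem_iUnion, Set.mem_prod]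
      constructor
      · intro h
        exact ⟨blockOf n p.1, fun i => rfl, h⟩
      · rintro ⟨a, h1, h2⟩
        have ha : blockOf n p.1 = a := funext fun i => h1 i
        rw [waitTime, ha]
        exact h2
    have hdisj : ∀ (n : ℕ), Pairwise (Function.onFun Disjoint fun a : Fin n → A =>
        (_root_.cylinder a) ×ˢ
          {ω' : ℤ → A | (hitTime a ω' : ℝ) * (P (_root_.cylinder a)).toReal ≤ (n : ℝ) ^ (-α₂)}) := by
      intro n a b hab
      rw [Function.onFun, Set.disjoint_left]
      rintro p ⟨h1, -⟩ ⟨h2, -⟩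
      exact hab (funext fun i => (h1 i).symm.trans (h2 i))
    have hcylsum : ∀ n : ℕ, (∑' a : Fin n → A, P (_root_.cylinder a)) = 1 := by
      intro n
      have hu : (⋃ a : Fin n → A, _root_.cylinder a) = Set.univ := by
        ext ω
        simp only [Set.mem_iUnion, Set.mem_univ, iff_true]
        exact ⟨blockOf n ω, fun i => rfl⟩
      have hd : Pairwise (Function.onFun Disjoint fun a : Fin n → A => _root_.cylinder a) := by
        intro a b hab
        rw [Function.onFun, Set.disjoint_left]
        intro ω h1 h2
        exact hab (funext fun i => (h1 i).symm.trans (h2 i))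
      rw [← measure_iUnion hd fun a => measurableSet_cylinder a, hu, measure_univ]
    have hμB : ∀ n : ℕ, 1 ≤ n →
        μ (B n) ≤ ENNReal.ofReal (C * Real.exp (-c * n) + ρ₂ * (n : ℝ) ^ (-α₂)) := by
      intro n hn
      have hnpos : (0 : ℝ) < (n : ℝ) := by exact_mod_cast hn
      have ht : (0 : ℝ) < (n : ℝ) ^ (-α₂) := Real.rpow_pos_of_pos hnpos _
      rw [hBeq n,
        measure_iUnion (hdisj n) fun a => (measurableSet_cylinder a).prod
          (measurableSet_hitSet a _ _)]
      calc
        (∑' a : Fin n → A, μ ((_root_.cylinder a) ×ˢ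
            {ω' : ℤ → A | (hitTime a ω' : ℝ) * (P (_root_.cylinder a)).toReal ≤ (n : ℝ) ^ (-α₂)}))
            = ∑' a : Fin n → A, P (_root_.cylinder a) *
              P {ω' : ℤ → A | (hitTime a ω' : ℝ) * (P (_root_.cylinder a)).toReal ≤ (n : ℝ) ^ (-α₂)} :=
          tsum_congr fun a => Measure.prod_prod _ _
        _ ≤ ∑' a : Fin n → A, P (_root_.cylinder a) *
              ENNReal.ofReal (C * Real.exp (-c * n) + ρ₂ * (n : ℝ) ^ (-α₂)) := by
          refine ENNReal.tsum_le_tsum fun a => mul_le_mul_right ?_ _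
          have h1 := hTail n a _ ht
          calc
            P {ω' : ℤ → A | (hitTime a ω' : ℝ) * (P (_root_.cylinder a)).toReal ≤ (n : ℝ) ^ (-α₂)}
                = ENNReal.ofReal
                  (P {ω' : ℤ → A |
                    (hitTime a ω' : ℝ) * (P (_root_.cylinder a)).toReal ≤ (n : ℝ) ^ (-α₂)}).toReal :=
              (ENNReal.ofReal_toReal (measure_ne_top _ _)).symm
            _ ≤ ENNReal.ofReal (C * Real.exp (-c * n) + ρ₂ * (n : ℝ) ^ (-α₂)) :=
              ENNReal.ofReal_le_ofReal h1
        _ = (∑' a : Fin n → A, P (_root_.cylinder a)) *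
              ENNReal.ofReal (C * Real.exp (-c * n) + ρ₂ * (n : ℝ) ^ (-α₂)) :=
          ENNReal.tsum_mul_right
        _ = ENNReal.ofReal (C * Real.exp (-c * n) + ρ₂ * (n : ℝ) ^ (-α₂)) := by
          rw [hcylsum n, one_mul]
    -- summability
    have hnn : ∀ n : ℕ, 0 ≤ C * Real.exp (-c * n) + ρ₂ * (n : ℝ) ^ (-α₂) := fun n =>
      add_nonneg (mul_nonneg hC.le (Real.exp_nonneg _))
        (mul_nonneg hρ₂.le (Real.rpow_nonneg (Nat.cast_nonneg n) _))
    have hf : Summable (fun n : ℕ => C * Real.exp (-c * n) + ρ₂ * (n : ℝ) ^ (-α₂)) := by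
      apply Summable.add
      · have heq : (fun n : ℕ => C * Real.exp (-c * n)) =
            fun n : ℕ => C * Real.exp (-c) ^ n := by
          funext n
          rw [← Real.exp_nat_mul, mul_comm (n : ℝ) (-c)]
        rw [heq]
        exact (summable_geometric_of_lt_one (Real.exp_nonneg _)
          (Real.exp_lt_one_iff.mpr (by linarith))).mul_left C
      · exact (Real.summable_nat_rpow.mpr (by linarith)).mul_left ρ₂
    have hsum : (∑' n : ℕ, μ (B n)) ≠ ⊤ := by
      have hle : (∑' n : ℕ, μ (B n)) ≤
          (∑' n : ℕ, ENNReal.ofReal (C * Real.exp (-c * n) + ρ₂ * (n : ℝ) ^ (-α₂))) +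
            ∑' n : ℕ, (if n = 0 then (1 : ENNReal) else 0) := by
        rw [← ENNReal.tsum_add]
        refine ENNReal.tsum_le_tsum fun n => ?_
        rcases Nat.eq_zero_or_pos n with rfl | hn
        · rw [if_pos rfl]
          calc μ (B 0) ≤ 1 := prob_le_one
            _ ≤ _ := le_add_self
        · rw [if_neg (by omega), add_zero]
          exact hμB n hn
      refine ne_top_of_le_ne_top ?_ hle
      rw [← ENNReal.ofReal_tsum_of_nonneg hnn hf, tsum_ite_eq]
      exact ENNReal.add_ne_top.mpr ⟨ENNReal.ofReal_ne_top, ENNReal.one_ne_top⟩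
    have hae := MeasureTheory.ae_eventually_notMem hsum
    filter_upwards [hae] with p hp
    filter_upwards [hp, eventually_ge_atTop 1] with n hn1 hn2
    have hnpos : (0 : ℝ) < (n : ℝ) := by exact_mod_cast hn2
    have ht : (0 : ℝ) < (n : ℝ) ^ (-α₂) := Real.rpow_pos_of_pos hnpos _
    have hgt : (n : ℝ) ^ (-α₂) <
        (waitTime n p.1 p.2 : ℝ) * (P (_root_.cylinder (blockOf n p.1))).toReal :=
      lt_of_not_ge fun hcon => hn1 hcon
    calc
      -α₂ * Real.log n = Real.log ((n : ℝ) ^ (-α₂)) := (Real.log_rpow hnpos _).symm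
      _ < Real.log ((waitTime n p.1 p.2 : ℝ) * (P (_root_.cylinder (blockOf n p.1))).toReal) :=
        Real.log_lt_log ht hgt
  · -- some singleton is not measurable: the tail hypothesis is contradictory
    exfalso
    push_neg at hsing
    obtain ⟨x, hx⟩ := hsing
    set 𝒞 : Set (Set A) := {E | MeasurableSet E ∧ x ∈ E} with h𝒞
    have hAtomMeas : MeasurableSet (⋂₀ 𝒞) :=
      MeasurableSet.sInter (Set.to_countable 𝒞) fun E hE => hE.1
    have hxAtom : x ∈ ⋂₀ 𝒞 := fun E hE => hE.2
    have hy : ∃ y ∈ ⋂₀ 𝒞, y ≠ x := by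
      by_contra hcon
      push_neg at hcon
      have heq : ⋂₀ 𝒞 = {x} :=
        Set.eq_singleton_iff_unique_mem.mpr ⟨hxAtom, fun y hy => hcon y hy⟩
      exact hx (heq ▸ hAtomMeas)
    obtain ⟨y, hyAtom, hyx⟩ := hy
    have hxy : ∀ E : Set A, MeasurableSet E → (x ∈ E ↔ y ∈ E) := by
      intro E hE
      constructor
      · intro hxE
        exact hyAtom E ⟨hE, hxE⟩
      · intro hyE
        by_contra hxE
        exact (hyAtom Eᶜ ⟨hE.compl, hxE⟩) hyE
    set Ψ : (ℤ → A) → (ℤ → A) := fun ω k => if ω k = x then y else ω k with hΨdef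
    have hΨinv : ∀ (ω : ℤ → A) (i : ℤ) (E : Set A), MeasurableSet E → (Ψ ω i ∈ E ↔ ω i ∈ E) := by
      intro ω i E hE
      show (if ω i = x then y else ω i) ∈ E ↔ ω i ∈ E
      by_cases h : ω i = x
      · rw [if_pos h, h]
        exact (hxy E hE).symm
      · rw [if_neg h]
    have hΨ : ∀ B : Set (ℤ → A), MeasurableSet B → Ψ ⁻¹' B = B := fun B hB =>
      preimage_eq_of_invariant hΨinv hB
    -- choose n with 1 ≤ n and C e^{-cn} < 1/2
    have hlim : Tendsto (fun m : ℕ => C * Real.exp (-c * m)) atTop (nhds 0) := by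
      have h0 : Tendsto (fun m : ℕ => Real.exp (-c) ^ m) atTop (nhds 0) :=
        tendsto_pow_atTop_nhds_zero_of_lt_one (Real.exp_nonneg _)
          (Real.exp_lt_one_iff.mpr (by linarith))
      have h1 := h0.const_mul C
      have heq : (fun m : ℕ => C * Real.exp (-c * m)) =
          fun m : ℕ => C * Real.exp (-c) ^ m := by
        funext m
        rw [← Real.exp_nat_mul, mul_comm (m : ℝ) (-c)]
      rw [heq]
      simpa using h1
    obtain ⟨n, hn1, hn2⟩ :=
      ((eventually_ge_atTop 1).and (hlim.eventually_lt_const (by norm_num : (0:ℝ) < 1/2))).exists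
    set a : Fin n → A := fun _ => x with ha
    have hΨne : ∀ (ω : ℤ → A) (j : ℤ), Ψ ω j ≠ x := by
      intro ω j
      show (if ω j = x then y else ω j) ≠ x
      by_cases h : ω j = x
      · rw [if_pos h]; exact hyx
      · rw [if_neg h]; exact h
    have hhit : ∀ ω : ℤ → A, hitTime a (Ψ ω) = 0 := by
      intro ω
      have hempty : {k : ℕ | 1 ≤ k ∧ shift^[k] (Ψ ω) ∈ _root_.cylinder a} = ∅ := by
        ext k
        simp only [Set.mem_setOf_eq, Set.mem_empty_iff_false, iff_false, not_and]
        intro hk hmem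
        have h0 := hmem ⟨0, by omega⟩
        rw [shift_iterate] at h0
        exact hΨne ω _ h0
      rw [hitTime, hempty, Nat.sInf_empty]
    have hZ : P {ω : ℤ → A | hitTime a ω = 0} = 1 := by
      have hBuniv : toMeasurable P {ω : ℤ → A | hitTime a ω = 0} = Set.univ := by
        apply Set.eq_univ_of_forall
        intro ω
        have h1 : Ψ ω ∈ {ω : ℤ → A | hitTime a ω = 0} := hhit ω
        have h2 : Ψ ω ∈ toMeasurable P {ω : ℤ → A | hitTime a ω = 0} :=
          subset_toMeasurable P _ h1
        have h3 := hΨ _ (measurableSet_toMeasurable P {ω : ℤ → A | hitTime a ω = 0})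
        rw [← h3]
        exact h2
      calc
        P {ω : ℤ → A | hitTime a ω = 0}
            = P (toMeasurable P {ω : ℤ → A | hitTime a ω = 0}) :=
          (measure_toMeasurable _).symm
        _ = 1 := by rw [hBuniv, measure_univ]
    set t0 : ℝ := 1 / (4 * ρ₂) with ht0
    have ht0pos : 0 < t0 := by positivity
    have hsub : {ω : ℤ → A | hitTime a ω = 0} ⊆
        {ω : ℤ → A | (hitTime a ω : ℝ) * (P (_root_.cylinder a)).toReal ≤ t0} := by
      intro ω hω
      simp only [Set.mem_setOf_eq] at hω ⊢
      rw [hω]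
      simpa using ht0pos.le
    have h1 : P {ω : ℤ → A | (hitTime a ω : ℝ) * (P (_root_.cylinder a)).toReal ≤ t0} = 1 :=
      le_antisymm prob_le_one (hZ ▸ measure_mono hsub)
    have h2 := hTail n a t0 ht0pos
    rw [h1] at h2
    simp only [ENNReal.toReal_one] at h2
    have h3 : ρ₂ * t0 = 1 / 4 := by
      rw [ht0]
      field_simp
    linarith
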